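/- Let A be a C*-algebra, I a simple closed two-sided ideal of A, and τ a lower semicontinuous densely defined trace on I. Then τ extends to a lower semicontinuous trace on A, and consequently for positive a, b ∈ I: if d_σ(a) ≤ d_σ(b) for every lower semicontinuous trace σ on A, then d_τ(a) ≤ d_τ(b) for every lower semicontinuous densely defined trace τ on I. -/

import Mathlib

open Filter Topology Polynomial
open scoped ENNReal NNReal

variable {A : Type*}

/-- Cuntz subequivalence: `a ≾ b` iff `vₙ * b * vₙ* → a` for some sequence `vₙ`. -/
def CuntzSub [NonUnitalRing A] [StarRing A] [TopologicalSpace A] (a b : A) : Prop :=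
  ∃ v : ℕ → A, Tendsto (fun n => v n * b * star (v n)) atTop (nhds a)

/-- Cuntz equivalence. -/
def CuntzEquiv [NonUnitalRing A] [StarRing A] [TopologicalSpace A] (a b : A) : Prop :=
  CuntzSub a b ∧ CuntzSub b a

/-- `(a - ε)₊`, the positive part of `a - ε`, via continuous functional calculus. -/
noncomputable def cutoff [CStarAlgebra A] (ε : ℝ) (a : A) : A :=
  cfc (fun t : ℝ => max (t - ε) 0) a
/-- A lower semicontinuous `[0,∞]`-valued trace on a C*-algebra. -/
structure LSCTrace (A : Type*) [CStarAlgebra A] [PartialOrder A] [StarOrderedRing A] where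
  toFun : A → ℝ≥0∞
  map_zero' : toFun 0 = 0
  add' : ∀ a b : A, 0 ≤ a → 0 ≤ b → toFun (a + b) = toFun a + toFun b
  smul' : ∀ (r : ℝ≥0) (a : A), 0 ≤ a → toFun (r • a) = r * toFun a
  trace' : ∀ a : A, toFun (star a * a) = toFun (a * star a)
  lsc : LowerSemicontinuous toFun

/-- The dimension function `d_τ(a) = lim_n τ(a^{1/n}) = sup_{ε>0} τ((a-ε)₊)`
associated to a lower semicontinuous trace `τ`. -/
noncomputable def dFun [CStarAlgebra A] [PartialOrder A] [StarOrderedRing A]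
    (τ : LSCTrace A) (a : A) : ℝ≥0∞ :=
  ⨆ ε : {ε : ℝ // 0 < ε}, τ.toFun (cutoff ε.1 a)

/-- A lower semicontinuous, densely defined `[0,∞]`-valued trace on a closed two-sided
ideal `I` of `A` (recorded as a function on `A` constrained on `I`). -/
structure LSCTraceOn (A : Type*) [CStarAlgebra A] [PartialOrder A] [StarOrderedRing A]
    (I : TwoSidedIdeal A) where
  toFun : A → ℝ≥0∞
  map_zero' : toFun 0 = 0
  add' : ∀ a b : A, a ∈ I → b ∈ I → 0 ≤ a → 0 ≤ b → toFun (a + b) = toFun a + toFun b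
  smul' : ∀ (r : ℝ≥0) (a : A), a ∈ I → 0 ≤ a → toFun (r • a) = r * toFun a
  trace' : ∀ x : A, star x * x ∈ I → x * star x ∈ I → toFun (star x * x) = toFun (x * star x)
  lsc : LowerSemicontinuousOn toFun (I : Set A)
  dense' : {x : A | x ∈ I ∧ 0 ≤ x} ⊆ closure {x : A | x ∈ I ∧ 0 ≤ x ∧ toFun x ≠ ∞}

/-- The dimension function of a trace on an ideal. -/
noncomputable def dFunOn [CStarAlgebra A] [PartialOrder A] [StarOrderedRing A]
    {I : TwoSidedIdeal A} (τ : LSCTraceOn A I) (a : A) : ℝ≥0∞ :=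
  ⨆ ε : {ε : ℝ // 0 < ε}, τ.toFun (cutoff ε.1 a)


section Aux
variable {A : Type*} [CStarAlgebra A] [PartialOrder A] [StarOrderedRing A]

lemma abs_le_of_mem_spectrum {a : A} {t : ℝ} (ht : t ∈ spectrum ℝ a) : |t| ≤ ‖a‖ := by
  rcases subsingleton_or_nontrivial A with h|h
  · exact absurd (isUnit_of_subsingleton _) (spectrum.mem_iff.mp ht)
  · simpa [Real.norm_eq_abs] using spectrum.norm_le_norm_of_mem ht

lemma spectrum_subset_Icc {a : A} (ha : 0 ≤ a) : spectrum ℝ a ⊆ Set.Icc 0 ‖a‖ := by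
  intro t ht
  exact ⟨spectrum_nonneg_of_nonneg ha ht, (le_abs_self t).trans (abs_le_of_mem_spectrum ht)⟩

lemma spectrum_subset_Icc' {a : A} (ha : IsSelfAdjoint a) :
    spectrum ℝ a ⊆ Set.Icc (-‖a‖) ‖a‖ := by
  intro t ht
  exact abs_le.mp (abs_le_of_mem_spectrum ht)

/-- A closed two-sided ideal is stable under `cfc` of functions vanishing at `0`. -/
lemma cfc_mem_ideal (I : TwoSidedIdeal A) (hIc : IsClosed (I : Set A)) {a : A}
    (haI : a ∈ I) (hsa : IsSelfAdjoint a) {f : ℝ → ℝ}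
    (hf : ContinuousOn f (Set.Icc (-‖a‖) ‖a‖)) (hf0 : f 0 = 0) : cfc f a ∈ I := by
  have hsub := spectrum_subset_Icc' hsa
  have hfc : ContinuousOn f (spectrum ℝ a) := hf.mono hsub
  have h0m : (0:ℝ) ∈ Set.Icc (-‖a‖) ‖a‖ := ⟨neg_nonpos.2 (norm_nonneg a), norm_nonneg a⟩
  have key : cfc f a ∈ closure (I : Set A) := by
    rw [Metric.mem_closure_iff]
    intro ε hε
    obtain ⟨p, hp⟩ := exists_polynomial_near_of_continuousOn (-‖a‖) ‖a‖ f hf (ε/3)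
      (by positivity)
    set c : ℝ := p.eval 0 with hc
    have hcsmall : |c| < ε/3 := by
      have := hp 0 h0m
      rw [hf0, sub_zero] at this
      exact this
    -- the element z is in the ideal
    obtain ⟨r, hr⟩ : X ∣ (p - C c) := by
      rw [X_dvd_iff, coeff_sub, coeff_zero_eq_eval_zero, coeff_C, if_pos rfl, sub_self]
    set z : A := cfc (fun t => (p - C c).eval t) a with hz
    have hzI : z ∈ I := by
      have : z = a * aeval a r := by
        rw [hz, cfc_polynomial _ a hsa, hr]
        simp [map_mul, aeval_X]
      rw [this]
      exact I.mul_mem_right _ _ haI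
    refine ⟨z, hzI, ?_⟩
    rw [dist_eq_norm]
    have heq : cfc f a - z = cfc (fun t => f t - (p - C c).eval t) a := by
      exact (cfc_sub f (fun t => (p - C c).eval t) a hfc (by fun_prop)).symm
    rw [heq]
    have hbound : ‖cfc (fun t => f t - (p - C c).eval t) a‖ ≤ 2*ε/3 := by
      apply norm_cfc_le (by positivity)
      intro t ht
      have h1 := hp t (hsub ht)
      have : (p - C c).eval t = p.eval t - c := by simp
      rw [this, Real.norm_eq_abs]
      have : f t - (p.eval t - c) = -(p.eval t - f t) + c := by ring
      rw [this]
      calc |(-(p.eval t - f t)) + c| ≤ |(-(p.eval t - f t))| + |c| := abs_add_le _ c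
        _ = |p.eval t - f t| + |c| := by rw [abs_neg]
        _ ≤ ε/3 + ε/3 := add_le_add (le_of_lt h1) (le_of_lt hcsmall)
        _ = 2*ε/3 := by ring
    linarith [hbound]
  rwa [hIc.closure_eq] at key

/-- Multiplier form: `cfc (fun t => t * g t) a ∈ I` for `a ∈ I`. -/
lemma cfc_mul_mem_ideal (I : TwoSidedIdeal A) {a : A}
    (haI : a ∈ I) (hsa : IsSelfAdjoint a) {g : ℝ → ℝ}
    (hg : ContinuousOn g (spectrum ℝ a)) : cfc (fun t => t * g t) a ∈ I := by
  rw [show (fun t : ℝ => t * g t) = (fun t : ℝ => (fun s : ℝ => s) t * g t) from rfl,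
    cfc_mul _ _ a (by fun_prop) hg, cfc_id' ℝ a]
  exact I.mul_mem_right _ _ haI

section Rt
/-- real square root via cfc -/
noncomputable def rt (a : A) : A := cfc Real.sqrt a

lemma rt_nonneg {a : A} : 0 ≤ rt a := cfc_nonneg fun t _ => Real.sqrt_nonneg t

lemma rt_sa {a : A} : IsSelfAdjoint (rt a) := IsSelfAdjoint.of_nonneg rt_nonneg

lemma rt_mul_self {a : A} (ha : 0 ≤ a) : rt a * rt a = a := by
  have hsa : IsSelfAdjoint a := IsSelfAdjoint.of_nonneg ha
  rw [rt, ← cfc_mul _ _ a (by fun_prop) (by fun_prop)]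
  have h : (spectrum ℝ a).EqOn (fun t => Real.sqrt t * Real.sqrt t) id := fun t ht =>
    Real.mul_self_sqrt (spectrum_nonneg_of_nonneg ha ht)
  rw [cfc_congr h, cfc_id ℝ a hsa]

lemma rt_mem (I : TwoSidedIdeal A) (hIc : IsClosed (I : Set A)) {a : A}
    (haI : a ∈ I) (ha : 0 ≤ a) : rt a ∈ I :=
  cfc_mem_ideal I hIc haI (IsSelfAdjoint.of_nonneg ha)
    (Real.continuous_sqrt.continuousOn) Real.sqrt_zero

lemma norm_rt_lt_one {a : A} (ha : 0 ≤ a) (h : ‖a‖ < 1) : ‖rt a‖ < 1 := by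
  have h1 : ‖rt a‖ ≤ Real.sqrt ‖a‖ := by
    apply norm_cfc_le (Real.sqrt_nonneg _)
    intro t ht
    rw [Real.norm_eq_abs, abs_of_nonneg (Real.sqrt_nonneg t)]
    exact Real.sqrt_le_sqrt ((spectrum_subset_Icc ha ht).2)
  calc ‖rt a‖ ≤ Real.sqrt ‖a‖ := h1
    _ < Real.sqrt 1 := Real.sqrt_lt_sqrt (norm_nonneg a) h
    _ = 1 := Real.sqrt_one
end Rt

section Good
/-- positive contractions (norm `< 1`) in the ideal -/
def goodSet (I : TwoSidedIdeal A) : Set A := {e | e ∈ I ∧ 0 ≤ e ∧ ‖e‖ < 1}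

variable {I : TwoSidedIdeal A}

lemma good_sa {e : A} (he : e ∈ goodSet I) : IsSelfAdjoint e := IsSelfAdjoint.of_nonneg he.2.1

lemma good_le_one {e : A} (he : e ∈ goodSet I) : e ≤ 1 :=
  (CStarAlgebra.norm_le_one_iff_of_nonneg e he.2.1).mp he.2.2.le

lemma good_sq {e : A} (he : e ∈ goodSet I) : e * e ∈ goodSet I := by
  obtain ⟨h1, h2, h3⟩ := he
  refine ⟨I.mul_mem_right _ _ h1, ?_, ?_⟩
  · have := star_mul_self_nonneg e
    rwa [(good_sa ⟨h1, h2, h3⟩).star_eq] at this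
  · calc ‖e * e‖ ≤ ‖e‖ * ‖e‖ := norm_mul_le e e
      _ < 1 := by nlinarith [norm_nonneg e]

lemma good_rt (hIc : IsClosed (I : Set A)) {e : A} (he : e ∈ goodSet I) : rt e ∈ goodSet I :=
  ⟨rt_mem I hIc he.1 he.2.1, rt_nonneg, norm_rt_lt_one he.2.1 he.2.2⟩
end Good

section Phi
/-- the function `t ↦ st/(1+st)` -/
noncomputable def phiF (s t : ℝ) : ℝ := s*t/(1+s*t)

variable {I : TwoSidedIdeal A}

lemma phiF_cont {s : ℝ} (hs : 0 ≤ s) {x : A} (hx : 0 ≤ x) :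
    ContinuousOn (phiF s) (spectrum ℝ x) := by
  apply ContinuousOn.div (by fun_prop) (by fun_prop)
  intro t ht
  have := spectrum_nonneg_of_nonneg hx ht
  nlinarith

lemma phiF_nonneg {s : ℝ} (hs : 0 ≤ s) {x : A} (hx : 0 ≤ x) : 0 ≤ cfc (phiF s) x := by
  apply cfc_nonneg
  intro t ht
  have := spectrum_nonneg_of_nonneg hx ht
  have h1 : 0 < 1 + s*t := by nlinarith
  exact div_nonneg (by nlinarith) h1.le

lemma phiF_mem {s : ℝ} (hs : 0 ≤ s) {x : A} (hx : 0 ≤ x) (hxI : x ∈ I) :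
    cfc (phiF s) x ∈ I := by
  have h : (spectrum ℝ x).EqOn (phiF s) (fun t => t * (s/(1+s*t))) := by
    intro t ht
    have := spectrum_nonneg_of_nonneg hx ht
    have h1 : (1:ℝ) + s*t ≠ 0 := by nlinarith
    simp only [phiF]
    rw [mul_div_assoc', mul_comm t s]
  rw [cfc_congr h]
  refine cfc_mul_mem_ideal I hxI (IsSelfAdjoint.of_nonneg hx) ?_
  apply ContinuousOn.div (by fun_prop) (by fun_prop)
  intro t ht
  have := spectrum_nonneg_of_nonneg hx ht
  nlinarith

lemma phiF_norm_lt {s : ℝ} (hs : 0 ≤ s) {x : A} (hx : 0 ≤ x) : ‖cfc (phiF s) x‖ < 1 := by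
  set M := ‖x‖ with hM
  have hM0 : 0 ≤ M := norm_nonneg x
  have hb : ‖cfc (phiF s) x‖ ≤ s*M/(1+s*M) := by
    apply norm_cfc_le (by positivity)
    intro t ht
    obtain ⟨ht0, htM⟩ := spectrum_subset_Icc hx ht
    have h1 : (0:ℝ) < 1 + s*t := by nlinarith
    have h2 : (0:ℝ) < 1 + s*M := by nlinarith
    simp only [phiF]
    rw [Real.norm_eq_abs, abs_of_nonneg (div_nonneg (by nlinarith) h1.le),
      div_le_div_iff₀ h1 h2]
    nlinarith
  have : s*M/(1+s*M) < 1 := by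
    rw [div_lt_one (by nlinarith)]
    nlinarith
  linarith

lemma good_phiF {s : ℝ} (hs : 0 ≤ s) {x : A} (hx : 0 ≤ x) (hxI : x ∈ I) :
    cfc (phiF s) x ∈ goodSet I :=
  ⟨phiF_mem hs hx hxI, phiF_nonneg hs hx, phiF_norm_lt hs hx⟩

lemma phiF_one_mono {x z : A} (hx : 0 ≤ x) (hz : 0 ≤ z) (hxz : x ≤ z) :
    cfc (phiF 1) x ≤ cfc (phiF 1) z := by
  have key : ∀ (y : A), 0 ≤ y →
      (cfc (fun t : ℝ => (1+t)⁻¹) y) * (1+y) = 1 ∧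
      (1+y) * (cfc (fun t : ℝ => (1+t)⁻¹) y) = 1 ∧
      cfc (phiF 1) y = 1 - cfc (fun t : ℝ => (1+t)⁻¹) y := by
    intro y hy
    have hsy : IsSelfAdjoint y := IsSelfAdjoint.of_nonneg hy
    have hcont : ContinuousOn (fun t : ℝ => (1+t)⁻¹) (spectrum ℝ y) := by
      apply ContinuousOn.inv₀ (by fun_prop)
      intro t ht
      have := spectrum_nonneg_of_nonneg hy ht
      nlinarith
    have h1y : (1:A) + y = cfc (fun t : ℝ => 1 + t) y := by
      rw [cfc_add y (fun _ => (1:ℝ)) (fun t => t) continuousOn_const (by fun_prop),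
        cfc_const_one ℝ y hsy, cfc_id' ℝ y hsy]
    constructor
    · rw [h1y, ← cfc_mul _ _ y hcont (by fun_prop)]
      have h : (spectrum ℝ y).EqOn (fun t : ℝ => (1+t)⁻¹ * (1+t)) (fun _ => (1:ℝ)) := by
        intro t ht
        have := spectrum_nonneg_of_nonneg hy ht
        have h1 : (1:ℝ) + t ≠ 0 := by nlinarith
        simp only
        field_simp
      rw [cfc_congr h, cfc_const_one ℝ y hsy]
    constructor
    · rw [h1y, ← cfc_mul _ _ y (by fun_prop) hcont]
      have h : (spectrum ℝ y).EqOn (fun t : ℝ => (1+t) * (1+t)⁻¹) (fun _ => (1:ℝ)) := by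
        intro t ht
        have := spectrum_nonneg_of_nonneg hy ht
        have h1 : (1:ℝ) + t ≠ 0 := by nlinarith
        simp only
        field_simp
      rw [cfc_congr h, cfc_const_one ℝ y hsy]
    · have h : cfc (phiF 1) y + cfc (fun t : ℝ => (1+t)⁻¹) y = 1 := by
        rw [← cfc_add y _ _ (phiF_cont zero_le_one hy) hcont]
        have h2 : (spectrum ℝ y).EqOn (fun t : ℝ => phiF 1 t + (1+t)⁻¹) (fun _ => (1:ℝ)) := by
          intro t ht
          have := spectrum_nonneg_of_nonneg hy ht
          have h1 : (1:ℝ) + t ≠ 0 := by nlinarith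
          simp only [phiF]
          field_simp
          ring
        rw [cfc_congr h2, cfc_const_one ℝ y hsy]
      exact eq_sub_of_add_eq h
  obtain ⟨hx1, hx2, hx3⟩ := key x hx
  obtain ⟨hz1, hz2, hz3⟩ := key z hz
  set ux : Aˣ := ⟨1+x, cfc (fun t : ℝ => (1+t)⁻¹) x, hx2, hx1⟩ with hux
  set uz : Aˣ := ⟨1+z, cfc (fun t : ℝ => (1+t)⁻¹) z, hz2, hz1⟩ with huz
  have hux0 : (0:A) ≤ (ux : A) := by
    simpa using add_nonneg zero_le_one hx
  have hle : (ux : A) ≤ (uz : A) := by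
    exact add_le_add (le_refl _) hxz
  have hinv := CStarAlgebra.inv_le_inv (a := ux) (b := uz) hux0 hle
  rw [hx3, hz3]
  exact sub_le_sub_left hinv 1
end Phi

end Aux

section Aux2
variable {A : Type*} [CStarAlgebra A] [PartialOrder A] [StarOrderedRing A]
variable {I : TwoSidedIdeal A}

lemma good_repr {d : A} (hd : d ∈ goodSet I) :
    ∃ x : A, 0 ≤ x ∧ x ∈ I ∧ cfc (phiF 1) x = d := by
  obtain ⟨hdI, hd0, hdn⟩ := hd
  have hsd : IsSelfAdjoint d := IsSelfAdjoint.of_nonneg hd0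
  have hspec := spectrum_subset_Icc hd0
  have hlt1 : ∀ t ∈ spectrum ℝ d, t < 1 := fun t ht => lt_of_le_of_lt (hspec ht).2 hdn
  have hne : ∀ t ∈ spectrum ℝ d, (1:ℝ) - t ≠ 0 := fun t ht => by
    have := hlt1 t ht; nlinarith
  have hψc : ContinuousOn (fun t : ℝ => t/(1-t)) (spectrum ℝ d) :=
    ContinuousOn.div (by fun_prop) (by fun_prop) hne
  refine ⟨cfc (fun t : ℝ => t/(1-t)) d, ?_, ?_, ?_⟩
  · apply cfc_nonneg
    intro t ht
    have h0 := (hspec ht).1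
    have h1 := hlt1 t ht
    exact div_nonneg h0 (by linarith)
  · have h : (spectrum ℝ d).EqOn (fun t : ℝ => t/(1-t)) (fun t => t * (1-t)⁻¹) := by
      intro t ht
      simp only [div_eq_mul_inv]
    rw [cfc_congr h]
    exact cfc_mul_mem_ideal I hdI hsd (ContinuousOn.inv₀ (by fun_prop) hne)
  · have himg : ∀ u ∈ (fun t : ℝ => t/(1-t)) '' spectrum ℝ d, 0 ≤ u := by
      rintro u ⟨t, ht, rfl⟩
      exact div_nonneg (hspec ht).1 (by have := hlt1 t ht; linarith)
    have hφc : ContinuousOn (phiF 1) ((fun t : ℝ => t/(1-t)) '' spectrum ℝ d) := by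
      apply ContinuousOn.div (by fun_prop) (by fun_prop)
      intro u hu
      have := himg u hu
      nlinarith
    rw [← cfc_comp (phiF 1) (fun t : ℝ => t/(1-t)) d hsd hφc hψc]
    have h : (spectrum ℝ d).EqOn ((phiF 1) ∘ (fun t : ℝ => t/(1-t))) id := by
      intro t ht
      have h1 : (1:ℝ) - t ≠ 0 := hne t ht
      simp only [Function.comp_apply, phiF, one_mul, id_eq]
      field_simp
      ring
    rw [cfc_congr h, cfc_id ℝ d hsd]

lemma good_directed {e f : A} (he : e ∈ goodSet I) (hf : f ∈ goodSet I) :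
    ∃ g, g ∈ goodSet I ∧ e ≤ g ∧ f ≤ g := by
  obtain ⟨x, hx0, hxI, hxe⟩ := good_repr he
  obtain ⟨y, hy0, hyI, hyf⟩ := good_repr hf
  refine ⟨cfc (phiF 1) (x + y), good_phiF zero_le_one (add_nonneg hx0 hy0) (I.add_mem hxI hyI),
    ?_, ?_⟩
  · rw [← hxe]
    exact phiF_one_mono hx0 (add_nonneg hx0 hy0) (le_add_of_nonneg_right hy0)
  · rw [← hyf]
    exact phiF_one_mono hy0 (add_nonneg hx0 hy0) (le_add_of_nonneg_left hx0)

/-- approximate unit sequence associated to a positive element -/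
noncomputable def gseq (c : A) (n : ℕ) : A := cfc (phiF ((n:ℝ)+1)) c

lemma good_gseq {c : A} (hc : 0 ≤ c) (hcI : c ∈ I) (n : ℕ) : gseq c n ∈ goodSet I :=
  good_phiF (by positivity) hc hcI

lemma tendsto_conj (b : A) :
    Tendsto (fun n => star b * gseq (b * star b) n * b) atTop (𝓝 (star b * b)) := by
  set c : A := b * star b with hc
  have hc0 : 0 ≤ c := mul_star_self_nonneg b
  have hsc : IsSelfAdjoint c := IsSelfAdjoint.of_nonneg hc0
  have key : ∀ n : ℕ, ‖star b * gseq c n * b - star b * b‖ ≤ ‖b‖ * Real.sqrt (1/((n:ℝ)+1)) := by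
    intro n
    have hs0 : (0:ℝ) < (n:ℝ)+1 := by positivity
    set s : ℝ := (n:ℝ)+1 with hs
    have hcont1 : ContinuousOn (fun t : ℝ => phiF s t - 1) (spectrum ℝ c) :=
      (phiF_cont hs0.le hc0).sub continuousOn_const
    set d : A := cfc (fun t => phiF s t - 1) c with hd
    have hgs : gseq c n = cfc (phiF s) c := by rw [gseq]
    have hdeq : d = gseq c n - 1 := by
      rw [hd, hgs, cfc_sub (phiF s) (fun _ => (1:ℝ)) c (phiF_cont hs0.le hc0) continuousOn_const,
        cfc_const_one ℝ c hsc]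
    have hsd : IsSelfAdjoint d := by
      rw [hdeq, hgs]
      exact ((IsSelfAdjoint.of_nonneg (phiF_nonneg hs0.le hc0)).sub (IsSelfAdjoint.one A))
    have hrw : star b * gseq c n * b - star b * b = star b * (d * b) := by
      rw [hdeq]; noncomm_ring
    have hdcd : (d * b) * star (d * b) = cfc (fun t => (phiF s t - 1) * t * (phiF s t - 1)) c := by
      have h1 : cfc (fun t : ℝ => (phiF s t - 1) * t) c = d * c := by
        rw [cfc_mul _ _ c hcont1 (by fun_prop), cfc_id' ℝ c hsc, hd]
      have h2 : cfc (fun t : ℝ => (phiF s t - 1) * t * (phiF s t - 1)) c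
          = (d * c) * d := by
        rw [cfc_mul (fun t => (phiF s t - 1) * t) (fun t => phiF s t - 1) c (hcont1.mul continuousOn_id) hcont1, h1, hd]
      rw [h2, star_mul, hsd.star_eq, hc]
      noncomm_ring
    have hnorm : ‖(d * b) * star (d * b)‖ ≤ 1/s := by
      rw [hdcd]
      apply norm_cfc_le (by positivity)
      intro t ht
      have ht0 := spectrum_nonneg_of_nonneg hc0 ht
      have hu : (0:ℝ) < 1 + s*t := by nlinarith
      have hphi : phiF s t - 1 = -(1/(1+s*t)) := by
        simp only [phiF]
        field_simp
        ring
      rw [hphi]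
      have heq : -(1/(1+s*t)) * t * -(1/(1+s*t)) = t/(1+s*t)^2 := by
        rw [sq]
        field_simp
      rw [heq, Real.norm_eq_abs, abs_of_nonneg (by positivity)]
      rw [div_le_div_iff₀ (by positivity) hs0]
      nlinarith
    have hdb : ‖d * b‖ ≤ Real.sqrt (1/s) := by
      rw [show (1:ℝ)/s = (Real.sqrt (1/s))^2 by rw [Real.sq_sqrt (by positivity)]] at hnorm
      rw [CStarRing.norm_self_mul_star] at hnorm
      nlinarith [norm_nonneg (d*b), Real.sqrt_nonneg (1/s)]
    calc ‖star b * gseq c n * b - star b * b‖ = ‖star b * (d * b)‖ := by rw [hrw]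
      _ ≤ ‖star b‖ * ‖d * b‖ := norm_mul_le _ _
      _ = ‖b‖ * ‖d * b‖ := by rw [norm_star]
      _ ≤ ‖b‖ * Real.sqrt (1/s) := by
          exact mul_le_mul_of_nonneg_left hdb (norm_nonneg b)
  rw [tendsto_iff_norm_sub_tendsto_zero]
  apply squeeze_zero (fun n => norm_nonneg _) key
  have h1 : Tendsto (fun n : ℕ => Real.sqrt (1/((n:ℝ)+1))) atTop (𝓝 0) := by
    have h2 : Tendsto (fun n : ℕ => 1/((n:ℝ)+1)) atTop (𝓝 0) :=
      tendsto_one_div_add_atTop_nhds_zero_nat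
    have h3 := (Real.continuous_sqrt.tendsto 0).comp h2
    rw [Real.sqrt_zero] at h3
    exact h3
  simpa using h1.const_mul ‖b‖

lemma lsc_le_of_tendsto (τ : LSCTraceOn A I) {z : A} (hz : z ∈ I)
    {f : ℕ → A} (hfI : ∀ n, f n ∈ I) (hconv : Tendsto f atTop (𝓝 z)) {C : ℝ≥0∞}
    (hC : ∀ n, τ.toFun (f n) ≤ C) : τ.toFun z ≤ C := by
  by_contra hlt
  push_neg at hlt
  have hev := τ.lsc z hz C hlt
  have hconv' : Tendsto f atTop (𝓝[(I : Set A)] z) :=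
    tendsto_nhdsWithin_iff.mpr ⟨hconv, Filter.Eventually.of_forall hfI⟩
  obtain ⟨n, hn⟩ := (hconv'.eventually hev).exists
  exact absurd (hC n) (not_le.mpr hn)

end Aux2


section Aux3
variable {A : Type*} [CStarAlgebra A] [PartialOrder A] [StarOrderedRing A]
variable {I : TwoSidedIdeal A}

/-- the canonical extension of a trace on an ideal -/
noncomputable def extFun (τ : LSCTraceOn A I) (a : A) : ℝ≥0∞ :=
  ⨆ e : goodSet I, τ.toFun (e.1 * a * e.1)

lemma extFun_def (τ : LSCTraceOn A I) (a : A) :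
    extFun τ a = ⨆ e : goodSet I, τ.toFun (e.1 * a * e.1) := rfl

lemma tau_mono (τ : LSCTraceOn A I) {x y : A} (hx : x ∈ I) (hy : y ∈ I) (hx0 : 0 ≤ x)
    (hxy : x ≤ y) : τ.toFun x ≤ τ.toFun y := by
  have h1 : y = x + (y - x) := by abel
  rw [h1, τ.add' x (y-x) hx (I.sub_mem hy hx) hx0 (sub_nonneg.mpr hxy)]
  exact le_self_add

lemma tau_conj_eq (τ : LSCTraceOn A I) (c e : A) (hse : IsSelfAdjoint e) (heI : e ∈ I) :
    τ.toFun (e * (c * star c) * e) = τ.toFun (star c * (e * e) * c) := by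
  have hm1 : e * (c * star c) * e ∈ I :=
    I.mul_mem_right _ _ (I.mul_mem_right _ _ heI)
  have hm2 : star c * (e * e) * c ∈ I :=
    I.mul_mem_right _ _ (I.mul_mem_left _ _ (I.mul_mem_right _ _ heI))
  have h1 : star (star c * e) * (star c * e) = e * (c * star c) * e := by
    simp [star_mul, hse.star_eq, mul_assoc]
  have h2 : (star c * e) * star (star c * e) = star c * (e * e) * c := by
    simp [star_mul, hse.star_eq, mul_assoc]
  have h := τ.trace' (star c * e) (by rw [h1]; exact hm1) (by rw [h2]; exact hm2)
  rwa [h1, h2] at h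

lemma ext_eq_sup_conj (τ : LSCTraceOn A I) (hIc : IsClosed (I : Set A)) (c : A) :
    extFun τ (c * star c) = ⨆ e : goodSet I, τ.toFun (star c * e.1 * c) := by
  rw [extFun_def]
  have step1 : ∀ e : goodSet I, τ.toFun (e.1 * (c * star c) * e.1)
      = τ.toFun (star c * (e.1 * e.1) * c) :=
    fun e => tau_conj_eq τ c e.1 (good_sa e.2) e.2.1
  apply le_antisymm
  · apply iSup_le; intro e
    rw [step1 e]
    exact le_iSup (fun f : goodSet I => τ.toFun (star c * f.1 * c)) ⟨e.1*e.1, good_sq e.2⟩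
  · apply iSup_le; intro f
    have hrtf : rt f.1 ∈ goodSet I := good_rt hIc f.2
    have h := step1 ⟨rt f.1, hrtf⟩
    rw [rt_mul_self f.2.2.1] at h
    rw [← h]
    exact le_iSup (fun e : goodSet I => τ.toFun (e.1 * (c * star c) * e.1)) ⟨rt f.1, hrtf⟩

lemma ext_zero (τ : LSCTraceOn A I) : extFun τ 0 = 0 := by
  refine le_antisymm (iSup_le fun e => ?_) zero_le
  rw [mul_zero, zero_mul, τ.map_zero']

lemma good_conj_mem (τ : LSCTraceOn A I) (e : goodSet I) (a : A) : e.1 * a * e.1 ∈ I :=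
  I.mul_mem_right _ _ (I.mul_mem_right _ _ e.2.1)

lemma good_conj_nonneg (e : goodSet I) {a : A} (ha : 0 ≤ a) : 0 ≤ e.1 * a * e.1 := by
  have h := star_right_conjugate_nonneg ha e.1
  rwa [(good_sa e.2).star_eq] at h

lemma ext_smul (τ : LSCTraceOn A I) (r : ℝ≥0) (a : A) (ha : 0 ≤ a) :
    extFun τ (r • a) = r * extFun τ a := by
  rw [extFun_def, extFun_def, ENNReal.mul_iSup]
  apply iSup_congr
  intro e
  have h1 : e.1 * (r • a) * e.1 = r • (e.1 * a * e.1) := by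
    rw [mul_smul_comm, smul_mul_assoc]
  rw [h1, τ.smul' r _ (good_conj_mem τ e a) (good_conj_nonneg e ha)]

lemma ext_agree (τ : LSCTraceOn A I) (hIc : IsClosed (I : Set A)) {x : A} (hx : x ∈ I)
    (hx0 : 0 ≤ x) : extFun τ x = τ.toFun x := by
  have hstar : star (rt x) = rt x := rt_sa.star_eq
  have hrx : rt x * rt x = x := rt_mul_self hx0
  have hsup : extFun τ x = ⨆ e : goodSet I, τ.toFun (rt x * e.1 * rt x) := by
    have h := ext_eq_sup_conj τ hIc (rt x)
    rw [hstar, hrx] at h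
    exact h
  rw [hsup]
  apply le_antisymm
  · apply iSup_le; intro e
    have hmem : rt x * e.1 * rt x ∈ I :=
      I.mul_mem_right _ _ (I.mul_mem_left _ _ e.2.1)
    have hpos : 0 ≤ rt x * e.1 * rt x := by
      have h := star_left_conjugate_nonneg e.2.2.1 (rt x)
      rwa [hstar] at h
    have hle : rt x * e.1 * rt x ≤ x := by
      have h1 := star_left_conjugate_le_conjugate (good_le_one e.2) (rt x)
      rwa [mul_one, hstar, hrx] at h1
    exact tau_mono τ hmem hx hpos hle
  · have hconv := tendsto_conj (rt x)
    rw [hstar, hrx] at hconv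
    have hmemf : ∀ n, rt x * gseq x n * rt x ∈ I := fun n =>
      I.mul_mem_right _ _ (I.mul_mem_left _ _ (good_gseq hx0 hx n).1)
    apply lsc_le_of_tendsto τ hx hmemf hconv
    intro n
    exact le_iSup (fun e : goodSet I => τ.toFun (rt x * e.1 * rt x))
      ⟨gseq x n, good_gseq hx0 hx n⟩

lemma ext_add (τ : LSCTraceOn A I) (hIc : IsClosed (I : Set A)) {a b : A} (ha : 0 ≤ a)
    (hb : 0 ≤ b) : extFun τ (a + b) = extFun τ a + extFun τ b := by
  have hsa : star (rt a) = rt a := rt_sa.star_eq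
  have hsb : star (rt b) = rt b := rt_sa.star_eq
  have hra : rt a * rt a = a := rt_mul_self ha
  have hrb : rt b * rt b = b := rt_mul_self hb
  -- G c f := τ (rt c * f * rt c)
  have step1 : ∀ (c : A), 0 ≤ c → ∀ e : goodSet I,
      τ.toFun (e.1 * c * e.1) = τ.toFun (rt c * (e.1 * e.1) * rt c) := by
    intro c hc e
    have h := tau_conj_eq τ (rt c) e.1 (good_sa e.2) e.2.1
    rw [IsSelfAdjoint.star_eq rt_sa, rt_mul_self hc] at h
    exact h
  have hGmono : ∀ (c : A) (e f : A), e ∈ goodSet I → f ∈ goodSet I → e ≤ f →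
      τ.toFun (rt c * e * rt c) ≤ τ.toFun (rt c * f * rt c) := by
    intro c e f he hf hef
    have h1 := star_left_conjugate_nonneg he.2.1 (rt c)
    have h2 := star_left_conjugate_le_conjugate hef (rt c)
    rw [IsSelfAdjoint.star_eq rt_sa] at h1 h2
    exact tau_mono τ (I.mul_mem_right _ _ (I.mul_mem_left _ _ he.1))
      (I.mul_mem_right _ _ (I.mul_mem_left _ _ hf.1)) h1 h2
  have step0 : extFun τ (a + b)
      = ⨆ e : goodSet I, (τ.toFun (rt a * (e.1*e.1) * rt a)
        + τ.toFun (rt b * (e.1*e.1) * rt b)) := by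
    rw [extFun_def]
    apply iSup_congr
    intro e
    have hsplit : e.1 * (a + b) * e.1 = e.1 * a * e.1 + e.1 * b * e.1 := by noncomm_ring
    rw [hsplit, τ.add' _ _ (good_conj_mem τ e a) (good_conj_mem τ e b)
      (good_conj_nonneg e ha) (good_conj_nonneg e hb), step1 a ha e, step1 b hb e]
  have step2 : (⨆ e : goodSet I, (τ.toFun (rt a * (e.1*e.1) * rt a)
        + τ.toFun (rt b * (e.1*e.1) * rt b)))
      = ⨆ f : goodSet I, (τ.toFun (rt a * f.1 * rt a)
        + τ.toFun (rt b * f.1 * rt b)) := by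
    apply le_antisymm
    · apply iSup_le; intro e
      exact le_iSup (fun f : goodSet I => τ.toFun (rt a * f.1 * rt a)
        + τ.toFun (rt b * f.1 * rt b)) ⟨e.1*e.1, good_sq e.2⟩
    · apply iSup_le; intro f
      have hrtf : rt f.1 ∈ goodSet I := good_rt hIc f.2
      have h : f.1 = rt f.1 * rt f.1 := (rt_mul_self f.2.2.1).symm
      calc τ.toFun (rt a * f.1 * rt a) + τ.toFun (rt b * f.1 * rt b)
          = τ.toFun (rt a * (rt f.1 * rt f.1) * rt a)
            + τ.toFun (rt b * (rt f.1 * rt f.1) * rt b) := by rw [← h]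
        _ ≤ _ := le_iSup (fun e : goodSet I => τ.toFun (rt a * (e.1*e.1) * rt a)
            + τ.toFun (rt b * (e.1*e.1) * rt b)) ⟨rt f.1, hrtf⟩
  have step3 : (⨆ f : goodSet I, (τ.toFun (rt a * f.1 * rt a)
        + τ.toFun (rt b * f.1 * rt b)))
      = (⨆ f : goodSet I, τ.toFun (rt a * f.1 * rt a))
        + ⨆ f : goodSet I, τ.toFun (rt b * f.1 * rt b) := by
    rw [ENNReal.iSup_add_iSup]
    intro i j
    obtain ⟨k, hk, hik, hjk⟩ := good_directed i.2 j.2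
    exact ⟨⟨k, hk⟩, add_le_add (hGmono a i.1 k i.2 hk hik) (hGmono b j.1 k j.2 hk hjk)⟩
  have hA : (⨆ f : goodSet I, τ.toFun (rt a * f.1 * rt a)) = extFun τ a := by
    have h := ext_eq_sup_conj τ hIc (rt a)
    rw [hsa, hra] at h
    exact h.symm
  have hB : (⨆ f : goodSet I, τ.toFun (rt b * f.1 * rt b)) = extFun τ b := by
    have h := ext_eq_sup_conj τ hIc (rt b)
    rw [hsb, hrb] at h
    exact h.symm
  rw [step0, step2, step3, hA, hB]

lemma ext_trace (τ : LSCTraceOn A I) (hIc : IsClosed (I : Set A)) (a : A) :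
    extFun τ (star a * a) = extFun τ (a * star a) := by
  suffices h : ∀ a : A, extFun τ (star a * a) ≤ extFun τ (a * star a) by
    refine le_antisymm (h a) ?_
    have := h (star a)
    rwa [star_star] at this
  clear a
  intro a
  have h1 : extFun τ (star a * a) = ⨆ e : goodSet I, τ.toFun (a * e.1 * star a) := by
    have h := ext_eq_sup_conj τ hIc (star a)
    rwa [star_star] at h
  have h2 : extFun τ (a * star a) = ⨆ e : goodSet I, τ.toFun (star a * e.1 * a) :=
    ext_eq_sup_conj τ hIc a
  rw [h1, h2]
  apply iSup_le
  intro e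
  set r : A := rt e.1 with hrdef
  have hrI : r ∈ I := (good_rt hIc e.2).1
  have hrr : r * r = e.1 := rt_mul_self e.2.2.1
  have hrs : star r = r := rt_sa.star_eq
  set b : A := a * r with hbdef
  have hbI : b ∈ I := I.mul_mem_left _ _ hrI
  have hb1 : b * star b = a * e.1 * star a := by
    rw [hbdef, star_mul, hrs,
      show a * r * (r * star a) = a * (r * r) * star a by noncomm_ring, hrr]
  have hswap1 : τ.toFun (a * e.1 * star a) = τ.toFun (star b * b) := by
    have h := τ.trace' b (I.mul_mem_left _ _ hbI) (I.mul_mem_right _ _ hbI)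
    rw [hb1] at h
    exact h.symm
  rw [hswap1]
  set c : A := b * star b with hcdef
  have hcI : c ∈ I := I.mul_mem_right _ _ hbI
  have hc0 : 0 ≤ c := mul_star_self_nonneg b
  have hmemf : ∀ n, star b * gseq c n * b ∈ I := fun n =>
    I.mul_mem_left _ _ hbI
  apply lsc_le_of_tendsto τ (I.mul_mem_left _ _ hbI) hmemf (tendsto_conj b)
  intro n
  set g : A := gseq c n with hgdef
  have hgood : g ∈ goodSet I := good_gseq hc0 hcI n
  set sn : A := rt g with hsndef
  have hsnI : sn ∈ I := (good_rt hIc hgood).1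
  have hsns : star sn = sn := rt_sa.star_eq
  have hsnn : sn * sn = g := rt_mul_self hgood.2.1
  have q1 : star (sn * b) * (sn * b) = star b * g * b := by
    rw [star_mul, hsns,
      show star b * sn * (sn * b) = star b * (sn * sn) * b by noncomm_ring, hsnn]
  have q2 : (sn * b) * star (sn * b) = sn * c * sn := by
    rw [star_mul, hsns, hcdef,
      show sn * b * (star b * sn) = sn * (b * star b) * sn by noncomm_ring]
  have e1 : τ.toFun (star b * g * b) = τ.toFun (sn * c * sn) := by
    have h := τ.trace' (sn * b)
      (by rw [q1]; exact I.mul_mem_right _ _ (I.mul_mem_left _ _ hgood.1))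
      (by rw [q2]; exact I.mul_mem_right _ _ (I.mul_mem_right _ _ hsnI))
    rwa [q1, q2] at h
  rw [e1]
  have hc_le : c ≤ a * star a := by
    have h5 := star_right_conjugate_le_conjugate (good_le_one e.2) a
    rw [mul_one] at h5
    calc c = a * e.1 * star a := hb1
      _ ≤ a * star a := h5
  have e2 : τ.toFun (sn * c * sn) ≤ τ.toFun (sn * (a * star a) * sn) := by
    refine tau_mono τ (I.mul_mem_right _ _ (I.mul_mem_left _ _ hcI))
      (I.mul_mem_right _ _ (I.mul_mem_right _ _ hsnI)) ?_ ?_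
    · have h := star_left_conjugate_nonneg hc0 sn
      rwa [hsns] at h
    · have h := star_left_conjugate_le_conjugate hc_le sn
      rwa [hsns] at h
  refine le_trans e2 ?_
  have q3 : star (sn * a) * (sn * a) = star a * g * a := by
    rw [star_mul, hsns,
      show star a * sn * (sn * a) = star a * (sn * sn) * a by noncomm_ring, hsnn]
  have q4 : (sn * a) * star (sn * a) = sn * (a * star a) * sn := by
    rw [star_mul, hsns,
      show sn * a * (star a * sn) = sn * (a * star a) * sn by noncomm_ring]
  have e3 : τ.toFun (sn * (a * star a) * sn) = τ.toFun (star a * g * a) := by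
    have h := τ.trace' (sn * a)
      (by rw [q3]; exact I.mul_mem_right _ _ (I.mul_mem_left _ _ hgood.1))
      (by rw [q4]; exact I.mul_mem_right _ _ (I.mul_mem_right _ _ hsnI))
    rw [q3, q4] at h
    exact h.symm
  rw [e3]
  exact le_iSup (fun f : goodSet I => τ.toFun (star a * f.1 * a)) ⟨g, hgood⟩

lemma ext_lsc (τ : LSCTraceOn A I) : LowerSemicontinuous (extFun τ) := by
  intro x y hy
  rw [extFun_def] at hy
  obtain ⟨e, he⟩ := lt_iSup_iff.mp hy
  have hcont : Continuous fun z : A => e.1 * z * e.1 :=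
    (continuous_mul_left e.1).mul continuous_const
  have hmem : ∀ z : A, e.1 * z * e.1 ∈ I := fun z => good_conj_mem τ e z
  have hev := τ.lsc _ (hmem x) y he
  have ht : Tendsto (fun z : A => e.1 * z * e.1) (𝓝 x) (𝓝[(I : Set A)] (e.1 * x * e.1)) :=
    tendsto_nhdsWithin_iff.mpr ⟨hcont.tendsto x, Filter.Eventually.of_forall hmem⟩
  exact (ht.eventually hev).mono fun z hz =>
    lt_of_lt_of_le hz (le_iSup (fun f : goodSet I => τ.toFun (f.1 * z * f.1)) e)

lemma cutoff_nonneg (ε : ℝ) (x : A) : 0 ≤ cutoff ε x :=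
  cfc_nonneg fun t _ => le_max_right _ _

lemma cutoff_mem (I : TwoSidedIdeal A) {x : A} (hx : x ∈ I) (hx0 : 0 ≤ x) {ε : ℝ}
    (hε : 0 < ε) : cutoff ε x ∈ I := by
  have heq : (fun t : ℝ => max (t - ε) 0) = fun t => t * (max (t - ε) 0 / max t ε) := by
    funext t
    rcases le_or_gt t ε with h | h
    · rw [max_eq_right (by linarith)]
      simp
    · have h0 : max (t - ε) 0 = t - ε := max_eq_left (by linarith)
      have h1 : max t ε = t := max_eq_left h.le
      rw [h0, h1]
      have ht0 : t ≠ 0 := by intro h0; rw [h0] at h; linarith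
      field_simp
  rw [cutoff, heq]
  refine cfc_mul_mem_ideal I hx (IsSelfAdjoint.of_nonneg hx0) ?_
  apply Continuous.continuousOn
  exact Continuous.div (by fun_prop) (by fun_prop)
    (fun t => ne_of_gt (lt_max_iff.mpr (Or.inr hε)))

end Aux3


/-- A lower semicontinuous densely defined trace on a simple closed two-sided ideal `I`
extends to a lower semicontinuous trace on `A`; consequently comparison of dimension
functions over all traces of `A` implies comparison over all such traces of `I`. -/
theorem trace_extends_from_simple_ideal [CStarAlgebra A] [PartialOrder A] [StarOrderedRing A]
    (I : TwoSidedIdeal A) (hIc : IsClosed (I : Set A)) (hbot : I ≠ ⊥)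
    (hsimple : ∀ J : TwoSidedIdeal A, IsClosed (J : Set A) → J ≤ I → J = ⊥ ∨ J = I) :
    (∀ τ : LSCTraceOn A I, ∃ τ' : LSCTrace A, ∀ x ∈ I, 0 ≤ x → τ'.toFun x = τ.toFun x) ∧
    (∀ a b : A, a ∈ I → b ∈ I → 0 ≤ a → 0 ≤ b →
      (∀ σ : LSCTrace A, dFun σ a ≤ dFun σ b) →
      ∀ τ : LSCTraceOn A I, dFunOn τ a ≤ dFunOn τ b) := by
  have main : ∀ τ : LSCTraceOn A I, ∃ τ' : LSCTrace A,
      ∀ x ∈ I, 0 ≤ x → τ'.toFun x = τ.toFun x := by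
    intro τ
    refine ⟨⟨extFun τ, ext_zero τ, fun x y hx hy => ext_add τ hIc hx hy,
      fun r x hx => ext_smul τ r x hx, fun x => ext_trace τ hIc x, ext_lsc τ⟩, ?_⟩
    intro x hx hx0
    exact ext_agree τ hIc hx hx0
  refine ⟨main, ?_⟩
  intro a b haI hbI ha0 hb0 hcomp τ
  obtain ⟨τ', hτ'⟩ := main τ
  have hd : ∀ x, x ∈ I → 0 ≤ x → dFunOn τ x = dFun τ' x := by
    intro x hx hx0
    unfold dFun dFunOn
    refine iSup_congr fun ε => ?_
    exact (hτ' (cutoff ε.1 x) (cutoff_mem I hx hx0 ε.2) (cutoff_nonneg ε.1 x)).symm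
  rw [hd a haI ha0, hd b hbI hb0]
  exact hcomp τ'
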